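/- arXiv:1812.10324 — 2 statements merged into one kernel-verified Lean document; each statement's English description precedes it below -/
import Mathlib

section
/- Let p be an odd prime and define Φ(x) as the (terminating) hypergeometric series ₆F₅ with upper parameters (5-p)/4, (1-p)/2, (1-ix)/2, (1+ix)/2, (1-x)/2, (1+x)/2 and lower parameters (1-p)/4, 1+(ix-p)/2, 1-(ix+p)/2, 1+(x-p)/2, 1-(x+p)/2, evaluated at -1. Then Φ(x) = 0 identically as a rational function of x. -/
open Finset

/-- Pochhammer symbol `(x)_k = x(x+1)⋯(x+k-1)`, `(x)_0 = 1`. -/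
noncomputable def poch {K : Type*} [Field K] (x : K) (k : ℕ) : K :=
  ∏ j ∈ Finset.range k, (x + j)

section PochAux
variable {K : Type*} [Field K]
lemma poch_succ_right (a : K) (n : ℕ) : poch a (n + 1) = poch a n * (a + n) :=
  Finset.prod_range_succ _ _
lemma poch_succ_left (a : K) (n : ℕ) : poch a (n + 1) = a * poch (a + 1) n := by
  unfold poch
  rw [Finset.prod_range_succ', mul_comm]
  congr 1
  · simp
  · apply Finset.prod_congr rfl
    intro j _
    push_cast
    ring
lemma poch_shift (a : K) (n : ℕ) : poch a n * (a + n) = a * poch (a + 1) n := by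
  rw [← poch_succ_right, poch_succ_left]
lemma poch_reflect (a : K) (n : ℕ) : poch a n = (-1) ^ n * poch (1 - a - n) n := by
  unfold poch
  rw [← Finset.prod_range_reflect (fun j => a + (j : K)) n,
    show ((-1 : K) ^ n) = ∏ _j ∈ Finset.range n, (-1 : K) by simp,
    ← Finset.prod_mul_distrib]
  apply Finset.prod_congr rfl
  intro j hj
  have hj' := Finset.mem_range.mp hj
  have h1 : ((n - 1 - j : ℕ) : K) = (n : K) - 1 - j := by
    have h2 : n - 1 - j = n - (1 + j) := by omega
    rw [h2, Nat.cast_sub (by omega)]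
    push_cast
    ring
  simp only [h1]
  ring
lemma poch_add (a : K) (k n : ℕ) : poch a (k + n) = poch a k * poch (a + k) n := by
  unfold poch
  rw [Finset.prod_range_add]
  congr 1
  apply Finset.prod_congr rfl
  intro j _
  push_cast
  ring
lemma poch_cross {k n m : ℕ} (h : k + n = m) (a : K) :
    poch (1 - a - m) n * poch a k = (-1) ^ n * poch a m := by
  have h1 : poch (1 - a - (m : K)) n = (-1) ^ n * poch (a + k) n := by
    rw [poch_reflect (1 - a - (m : K)) n]
    congr 2
    have hm : (m : K) = (k : K) + (n : K) := by exact_mod_cast congrArg (Nat.cast : ℕ → K) h.symm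
    rw [hm]; ring
  rw [h1, ← h, poch_add]
  ring
lemma poch_one_eq_factorial (n : ℕ) : poch (1 : K) n = n.factorial := by
  induction n with
  | zero => simp [poch]
  | succ n ih =>
    rw [poch_succ_right, ih, Nat.factorial_succ]
    push_cast
    ring
end PochAux

section Key
variable {K : Type*} [Field K] [CharZero K]

lemma neg_one_pow_six (n : ℕ) : ((-1 : K) ^ n) ^ 6 = 1 := by
  rw [← pow_mul]
  exact Even.neg_one_pow ⟨3 * n, by ring⟩

lemma key_anti {k n m : ℕ} (hkn : k + n = m) (hm : m ≠ 0) (b d : K) :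
    poch (-(m : K) / 2 + 1) n * poch (-(m : K)) n * poch b n * poch (1 - b) n *
        poch d n * poch (1 - d) n * (-1) ^ n *
        (poch (-(m : K) / 2) k * poch (1 - b - m) k * poch (b - m) k *
          poch (1 - d - m) k * poch (d - m) k) * poch 1 k
    = -(poch (-(m : K) / 2 + 1) k * poch (-(m : K)) k * poch b k * poch (1 - b) k *
        poch d k * poch (1 - d) k * (-1) ^ k *
        (poch (-(m : K) / 2) n * poch (1 - b - m) n * poch (b - m) n *
          poch (1 - d - m) n * poch (d - m) n) * poch 1 n) := by
  set t : K := -(m : K) / 2 with ht_def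
  have hmK : (m : K) ≠ 0 := Nat.cast_ne_zero.mpr hm
  have ht : t ≠ 0 := by rw [ht_def]; exact div_ne_zero (neg_ne_zero.mpr hmK) two_ne_zero
  have hnkK : (k : K) + (n : K) = (m : K) := by exact_mod_cast congrArg (Nat.cast : ℕ → K) hkn
  have hnk' : n + k = m := by omega
  -- cross identities, n-side
  have c1n : poch (-(m : K)) n * poch 1 k = (-1 : K) ^ n * poch 1 m := by
    have h := poch_cross hkn (1 : K)
    rw [show (1 - 1 - (m : K)) = -(m : K) by ring] at h
    exact h
  have c2n : poch b n * poch (1 - b - m) k = (-1 : K) ^ n * poch (1 - b - m) m := by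
    have h := poch_cross hkn (1 - b - (m : K))
    rw [show (1 - (1 - b - (m : K)) - (m : K)) = b by ring] at h
    exact h
  have c3n : poch (1 - b) n * poch (b - m) k = (-1 : K) ^ n * poch (b - m) m := by
    have h := poch_cross hkn (b - (m : K))
    rw [show (1 - (b - (m : K)) - (m : K)) = 1 - b by ring] at h
    exact h
  have c4n : poch d n * poch (1 - d - m) k = (-1 : K) ^ n * poch (1 - d - m) m := by
    have h := poch_cross hkn (1 - d - (m : K))
    rw [show (1 - (1 - d - (m : K)) - (m : K)) = d by ring] at h
    exact h
  have c5n : poch (1 - d) n * poch (d - m) k = (-1 : K) ^ n * poch (d - m) m := by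
    have h := poch_cross hkn (d - (m : K))
    rw [show (1 - (d - (m : K)) - (m : K)) = 1 - d by ring] at h
    exact h
  -- cross identities, k-side
  have c1k : poch (-(m : K)) k * poch 1 n = (-1 : K) ^ k * poch 1 m := by
    have h := poch_cross hnk' (1 : K)
    rw [show (1 - 1 - (m : K)) = -(m : K) by ring] at h
    exact h
  have c2k : poch b k * poch (1 - b - m) n = (-1 : K) ^ k * poch (1 - b - m) m := by
    have h := poch_cross hnk' (1 - b - (m : K))
    rw [show (1 - (1 - b - (m : K)) - (m : K)) = b by ring] at h
    exact h
  have c3k : poch (1 - b) k * poch (b - m) n = (-1 : K) ^ k * poch (b - m) m := by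
    have h := poch_cross hnk' (b - (m : K))
    rw [show (1 - (b - (m : K)) - (m : K)) = 1 - b by ring] at h
    exact h
  have c4k : poch d k * poch (1 - d - m) n = (-1 : K) ^ k * poch (1 - d - m) m := by
    have h := poch_cross hnk' (1 - d - (m : K))
    rw [show (1 - (1 - d - (m : K)) - (m : K)) = d by ring] at h
    exact h
  have c5k : poch (1 - d) k * poch (d - m) n = (-1 : K) ^ k * poch (d - m) m := by
    have h := poch_cross hnk' (d - (m : K))
    rw [show (1 - (d - (m : K)) - (m : K)) = 1 - d by ring] at h
    exact h
  have sn := poch_shift t n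
  have sk := poch_shift t k
  have hu6 := neg_one_pow_six (K := K) n
  have hv6 := neg_one_pow_six (K := K) k
  have hs : (t + (n : K)) + (t + (k : K)) = 0 := by
    rw [ht_def]; linear_combination hnkK
  apply mul_left_cancel₀ ht
  have En : t * ((poch (t + 1) n * poch (-(m : K)) n * poch b n * poch (1 - b) n *
        poch d n * poch (1 - d) n) *
        (poch t k * poch (1 - b - m) k * poch (b - m) k *
          poch (1 - d - m) k * poch (d - m) k) * poch 1 k)
      = (poch t n * (t + n)) * ((-1 : K) ^ n * poch 1 m) * ((-1 : K) ^ n * poch (1 - b - m) m)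
        * ((-1 : K) ^ n * poch (b - m) m) * ((-1 : K) ^ n * poch (1 - d - m) m)
        * ((-1 : K) ^ n * poch (d - m) m) * poch t k := by
    calc t * ((poch (t + 1) n * poch (-(m : K)) n * poch b n * poch (1 - b) n *
        poch d n * poch (1 - d) n) *
        (poch t k * poch (1 - b - m) k * poch (b - m) k *
          poch (1 - d - m) k * poch (d - m) k) * poch 1 k)
        = (t * poch (t + 1) n) * (poch (-(m : K)) n * poch 1 k) *
          (poch b n * poch (1 - b - m) k) * (poch (1 - b) n * poch (b - m) k) *
          (poch d n * poch (1 - d - m) k) * (poch (1 - d) n * poch (d - m) k) *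
          poch t k := by ring
      _ = _ := by rw [← sn, c1n, c2n, c3n, c4n, c5n]
  have Ek : t * ((poch (t + 1) k * poch (-(m : K)) k * poch b k * poch (1 - b) k *
        poch d k * poch (1 - d) k) *
        (poch t n * poch (1 - b - m) n * poch (b - m) n *
          poch (1 - d - m) n * poch (d - m) n) * poch 1 n)
      = (poch t k * (t + k)) * ((-1 : K) ^ k * poch 1 m) * ((-1 : K) ^ k * poch (1 - b - m) m)
        * ((-1 : K) ^ k * poch (b - m) m) * ((-1 : K) ^ k * poch (1 - d - m) m)
        * ((-1 : K) ^ k * poch (d - m) m) * poch t n := by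
    calc t * ((poch (t + 1) k * poch (-(m : K)) k * poch b k * poch (1 - b) k *
        poch d k * poch (1 - d) k) *
        (poch t n * poch (1 - b - m) n * poch (b - m) n *
          poch (1 - d - m) n * poch (d - m) n) * poch 1 n)
        = (t * poch (t + 1) k) * (poch (-(m : K)) k * poch 1 n) *
          (poch b k * poch (1 - b - m) n) * (poch (1 - b) k * poch (b - m) n) *
          (poch d k * poch (1 - d - m) n) * (poch (1 - d) k * poch (d - m) n) *
          poch t n := by ring
      _ = _ := by rw [← sk, c1k, c2k, c3k, c4k, c5k]
  set Q : K := poch t n * poch t k * poch 1 m * poch (1 - b - m) m * poch (b - m) m *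
      poch (1 - d - m) m * poch (d - m) m with hQ
  linear_combination ((-1 : K) ^ n) * En + ((-1 : K) ^ k) * Ek +
    ((t + (n : K)) * Q) * hu6 + ((t + (k : K)) * Q) * hv6 + Q * hs
end Key


/-- Let `p` be an odd prime, `K` a field of characteristic zero with `i^2 = -1`.
The terminating `₆F₅` series `Φ(x)` with upper parameters
`(5-p)/4, (1-p)/2, (1-ix)/2, (1+ix)/2, (1-x)/2, (1+x)/2` and lower parameters
`(1-p)/4, 1+(ix-p)/2, 1-(ix+p)/2, 1+(x-p)/2, 1-(x+p)/2`, at argument `-1`,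
vanishes identically (the series terminates at `k = (p-1)/2` since
`((1-p)/2)_k = 0` for larger `k`).  We assume the lower-parameter Pochhammer
products are nonzero at each relevant `k` (i.e. `x` avoids the poles). -/
theorem phi_eq_zero (p : ℕ) [Fact p.Prime] (hp : Odd p)
    {K : Type*} [Field K] [CharZero K] (i : K) (hi : i ^ 2 = -1) (x : K)
    (hden : ∀ k ∈ Finset.range ((p - 1) / 2 + 1),
      poch ((1 - (p : K)) / 4) k * poch (1 + (i * x - p) / 2) k *
        poch (1 - (i * x + p) / 2) k * poch (1 + (x - p) / 2) k *
        poch (1 - (x + p) / 2) k ≠ 0) :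
    ∑ k ∈ Finset.range ((p - 1) / 2 + 1),
      poch ((5 - (p : K)) / 4) k * poch ((1 - (p : K)) / 2) k * poch ((1 - i * x) / 2) k *
          poch ((1 + i * x) / 2) k * poch ((1 - x) / 2) k * poch ((1 + x) / 2) k /
        (poch ((1 - (p : K)) / 4) k * poch (1 + (i * x - p) / 2) k *
          poch (1 - (i * x + p) / 2) k * poch (1 + (x - p) / 2) k *
          poch (1 - (x + p) / 2) k) * (-1) ^ k / (k.factorial : K) = 0 := by
  have hpp : p.Prime := Fact.out
  obtain ⟨r, hr⟩ := hp
  set m := (p - 1) / 2 with hm_def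
  have hpm : p = 2 * m + 1 := by omega
  have hm0 : m ≠ 0 := by
    have := hpp.two_le
    omega
  have hpK : (p : K) = 2 * (m : K) + 1 := by rw [hpm]; push_cast; ring
  have a1 : (5 - (p : K)) / 4 = -(m : K) / 2 + 1 := by rw [hpK]; ring
  have a2 : (1 - (p : K)) / 2 = -(m : K) := by rw [hpK]; ring
  have a4 : (1 + i * x) / 2 = 1 - (1 - i * x) / 2 := by ring
  have a5 : (1 + x) / 2 = 1 - (1 - x) / 2 := by ring
  have a6 : (1 - (p : K)) / 4 = -(m : K) / 2 := by rw [hpK]; ring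
  have a7 : 1 + (i * x - p) / 2 = 1 - (1 - i * x) / 2 - m := by rw [hpK]; ring
  have a8 : 1 - (i * x + p) / 2 = (1 - i * x) / 2 - m := by rw [hpK]; ring
  have a9 : 1 + (x - p) / 2 = 1 - (1 - x) / 2 - m := by rw [hpK]; ring
  have a10 : 1 - (x + p) / 2 = (1 - x) / 2 - m := by rw [hpK]; ring
  simp only [a1, a2, a4, a5, a6, a7, a8, a9, a10] at hden ⊢
  set b : K := (1 - i * x) / 2 with hb
  set d : K := (1 - x) / 2 with hd
  set G : ℕ → K := fun k =>
    poch (-(m : K) / 2 + 1) k * poch (-(m : K)) k * poch b k * poch (1 - b) k *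
        poch d k * poch (1 - d) k /
      (poch (-(m : K) / 2) k * poch (1 - b - m) k * poch (b - m) k *
        poch (1 - d - m) k * poch (d - m) k) * (-1) ^ k / (k.factorial : K) with hG
  show ∑ k ∈ Finset.range (m + 1), G k = 0
  have hpair : ∀ k ∈ Finset.range (m + 1), G k + G (m - k) = 0 := by
    intro k hk
    have hkm : k ≤ m := Nat.lt_succ_iff.mp (Finset.mem_range.mp hk)
    set n := m - k with hn
    have hkn : k + n = m := by omega
    have hDk := hden k hk
    have hDn := hden n (Finset.mem_range.mpr (by omega))
    have hfk : (k.factorial : K) ≠ 0 := Nat.cast_ne_zero.mpr k.factorial_ne_zero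
    have hfn : (n.factorial : K) ≠ 0 := Nat.cast_ne_zero.mpr n.factorial_ne_zero
    have key := key_anti (K := K) hkn hm0 b d
    rw [poch_one_eq_factorial, poch_one_eq_factorial] at key
    rw [hG]
    simp only []
    simp only [div_mul_eq_mul_div, div_div]
    rw [div_add_div _ _ (mul_ne_zero hDk hfk) (mul_ne_zero hDn hfn), div_eq_zero_iff]
    left
    linear_combination key
  have hrefl : ∑ j ∈ Finset.range (m + 1), G (m - j) = ∑ j ∈ Finset.range (m + 1), G j := by
    have h := Finset.sum_range_reflect G (m + 1)
    simpa using h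
  have h2 : ∑ k ∈ Finset.range (m + 1), (G k + G (m - k)) = 0 :=
    Finset.sum_eq_zero hpair
  rw [Finset.sum_add_distrib, hrefl] at h2
  have h3 : (2 : K) * ∑ k ∈ Finset.range (m + 1), G k = 0 := by
    rw [two_mul]; linear_combination h2
  exact (mul_eq_zero.mp h3).resolve_left two_ne_zero
end

section
/- For a prime p ≡ 3 (mod 4), Γ_p((p+1)/4) · Γ_p((1-p)/4) ≡ Γ_p(1/4)^2 (mod p^2), where Γ_p is the p-adic Gamma function. -/
open Finset

/-- Morita's p-adic Gamma function on `ℤ_p`: the continuous extension of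
`n ↦ (-1)^n ∏_{1 ≤ k < n, p ∤ k} k` (the limit is taken along the integer
approximations `x.appr n → x`). -/
noncomputable def moritaGamma (p : ℕ) [Fact p.Prime] (x : ℤ_[p]) : ℤ_[p] :=
  Filter.limUnder Filter.atTop (fun n : ℕ =>
    ((-1 : ℤ_[p]) ^ (x.appr n) *
      ∏ k ∈ (Finset.range (x.appr n)).filter (fun k => ¬ p ∣ k), (k : ℤ_[p])))

section ZModGeneral

variable {M : Type*} [CommMonoid M]

@[to_additive]
lemma prod_range_cast (N : ℕ) [NeZero N] (f : ZMod N → M) :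
    ∏ j ∈ range N, f (j : ZMod N) = ∏ x : ZMod N, f x :=
  Finset.prod_nbij' (fun j => (j : ZMod N)) (fun x => x.val)
    (fun j _ => mem_univ _)
    (fun x _ => mem_range.mpr (ZMod.val_lt x))
    (fun j hj => ZMod.val_cast_of_lt (mem_range.mp hj))
    (fun x _ => by simp [ZMod.natCast_val, ZMod.cast_id])
    (fun j _ => rfl)

@[to_additive]
lemma prod_zmod_translate (N : ℕ) [NeZero N] (a : ZMod N) (f : ZMod N → M) :
    ∏ x : ZMod N, f (a + x) = ∏ x : ZMod N, f x :=
  Fintype.prod_equiv (Equiv.addLeft a) _ _ (fun _ => rfl)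

end ZModGeneral

section PrimePow

variable {p : ℕ} (hp : p.Prime) {m : ℕ} (hm : m ≠ 0) (hodd : p % 2 = 1)

include hp hm in
lemma not_dvd_iff_isUnit {k : ℕ} : ¬ p ∣ k ↔ IsUnit (k : ZMod (p ^ m)) := by
  rw [ZMod.isUnit_iff_coprime, Nat.coprime_pow_right_iff (Nat.pos_of_ne_zero hm),
    Nat.coprime_comm]
  exact (Nat.Prime.coprime_iff_not_dvd hp).symm

include hp hodd in
lemma two_ne_zero_zmod : (2 : ZMod p) ≠ 0 := by
  haveI : NeZero p := ⟨hp.ne_zero⟩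
  intro h22
  have h2 : p ∣ 2 := (ZMod.natCast_eq_zero_iff 2 p).mp (by exact_mod_cast h22)
  have hle := Nat.le_of_dvd (by norm_num) h2
  have := hp.two_le
  omega

include hp hm in
lemma isUnit_iff_castHom (z : ZMod (p ^ m)) :
    IsUnit z ↔ (ZMod.castHom (dvd_pow_self p hm) (ZMod p) z) ≠ 0 := by
  haveI : NeZero (p ^ m) := ⟨pow_ne_zero _ hp.ne_zero⟩
  haveI : NeZero p := ⟨hp.ne_zero⟩
  have hz : ((z.val : ℕ) : ZMod (p ^ m)) = z := by simp [ZMod.natCast_val, ZMod.cast_id]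
  rw [← hz, map_natCast, ← not_dvd_iff_isUnit hp hm, Ne,
    ZMod.natCast_eq_zero_iff]

include hp hm hodd in
lemma sq_eq_one_zmod (x : ZMod (p ^ m)) (hx : x * x = 1) :
    x = 1 ∨ x = -1 := by
  haveI : NeZero p := ⟨hp.ne_zero⟩
  have h0 : (x - 1) * (x + 1) = 0 := by linear_combination hx
  set π := ZMod.castHom (dvd_pow_self p hm) (ZMod p) with hπ
  by_cases h : IsUnit (x - 1)
  · right
    have := h.mul_right_eq_zero.mp h0
    linear_combination this
  · left
    rw [isUnit_iff_castHom hp hm, not_not] at h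
    have h2 : IsUnit (x + 1) := by
      rw [isUnit_iff_castHom hp hm]
      have he : x + 1 = (x - 1) + 2 := by ring
      rw [he, map_add, ← hπ, h, zero_add]
      have : π (2 : ZMod (p ^ m)) = 2 := map_ofNat π 2
      rw [this]
      exact two_ne_zero_zmod hp hodd
    have := h2.mul_left_eq_zero.mp h0
    linear_combination this

open scoped Classical in
include hp hm hodd in
lemma wilson_zmod_pow [NeZero (p ^ m)] :
    ∏ x ∈ univ.filter (fun x : ZMod (p ^ m) => IsUnit x), x = -1 := by
  have hlt : 2 < p ^ m := lt_of_lt_of_le (by have := hp.two_le; omega) (Nat.le_self_pow hm p)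
  haveI : Fact (2 < p ^ m) := ⟨hlt⟩
  have hne : (-1 : ZMod (p ^ m)) ≠ 1 := ZMod.neg_one_ne_one
  have hmem : (-1 : ZMod (p ^ m)) ∈ univ.filter (fun x : ZMod (p ^ m) => IsUnit x) := by
    simp [isUnit_one.neg]
  set s := (univ.filter (fun x : ZMod (p ^ m) => IsUnit x)).erase (-1) with hs
  have hmem' : ∀ a ∈ s, a ≠ -1 ∧ IsUnit a := by
    intro a ha
    rw [hs, mem_erase, mem_filter] at ha
    exact ⟨ha.1, ha.2.2⟩
  have hinv_unit : ∀ a ∈ s, a⁻¹ * a = 1 := by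
    intro a ha
    rw [mul_comm]
    exact ZMod.mul_inv_of_unit a (hmem' a ha).2
  have gmem : ∀ a (_ : a ∈ s), a⁻¹ ∈ s := by
    intro a ha
    obtain ⟨hane, hu⟩ := hmem' a ha
    rw [hs, mem_erase, mem_filter]
    refine ⟨?_, mem_univ _, ?_⟩
    · intro h
      apply hane
      have h1 := hinv_unit a ha
      rw [h] at h1
      linear_combination -h1
    · obtain ⟨u, rfl⟩ := hu
      rw [ZMod.inv_coe_unit]
      exact Units.isUnit _
  have key : ∏ x ∈ s, x = 1 := by
    apply Finset.prod_involution (fun x _ => x⁻¹)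
    · intro a ha
      rw [mul_comm]; exact hinv_unit a ha
    · intro a ha hane
      intro hinv
      have hsq : a * a = 1 := by nth_rewrite 1 [← hinv]; exact hinv_unit a ha
      rcases sq_eq_one_zmod hp hm hodd a hsq with h1 | h1
      · exact hane h1
      · exact (hmem' a ha).1 h1
    · intro a ha
      obtain ⟨hane, ⟨u, rfl⟩⟩ := hmem' a ha
      rw [ZMod.inv_coe_unit, ZMod.inv_coe_unit, inv_inv]
    · exact gmem
  rw [← Finset.mul_prod_erase _ _ hmem, ← hs, key, mul_one]

end PrimePow

section Gz

open scoped Classical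

variable {p : ℕ} (hp : p.Prime) {m : ℕ} (hm : m ≠ 0) (hodd : p % 2 = 1)

include hp hm hodd in
lemma shifted_wilson [NeZero (p ^ m)] (n : ℕ) :
    ∏ j ∈ range (p ^ m), (if ¬ p ∣ (n + j) then ((n + j : ℕ) : ZMod (p ^ m)) else 1) = -1 := by
  have hterm : ∀ j : ℕ, (if ¬ p ∣ (n + j) then ((n + j : ℕ) : ZMod (p ^ m)) else 1)
      = (fun x : ZMod (p ^ m) => if IsUnit x then x else 1) ((n : ZMod (p ^ m)) + (j : ZMod (p ^ m))) := by
    intro j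
    have hcast : ((n + j : ℕ) : ZMod (p ^ m)) = (n : ZMod (p ^ m)) + (j : ZMod (p ^ m)) := by
      push_cast; ring
    have hcond : (¬ p ∣ (n + j)) ↔ IsUnit ((n : ZMod (p ^ m)) + (j : ZMod (p ^ m))) := by
      rw [← hcast]; exact not_dvd_iff_isUnit hp hm
    simp only []
    by_cases hd : p ∣ (n + j)
    · rw [if_neg (not_not_intro hd), if_neg (fun hu => (hcond.mpr hu) hd)]
    · rw [if_pos hd, if_pos (hcond.mp hd), hcast]
  calc ∏ j ∈ range (p ^ m), (if ¬ p ∣ (n + j) then ((n + j : ℕ) : ZMod (p ^ m)) else 1)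
      = ∏ j ∈ range (p ^ m),
        (fun x : ZMod (p ^ m) => if IsUnit x then x else 1) ((n : ZMod (p ^ m)) + (j : ZMod (p ^ m))) :=
        Finset.prod_congr rfl (fun j _ => hterm j)
    _ = ∏ x : ZMod (p ^ m), (if IsUnit ((n : ZMod (p ^ m)) + x) then (n : ZMod (p ^ m)) + x else 1) :=
        prod_range_cast (p ^ m) (fun x => if IsUnit ((n : ZMod (p ^ m)) + x) then (n : ZMod (p ^ m)) + x else 1)
    _ = ∏ x : ZMod (p ^ m), (if IsUnit x then x else 1) :=
        prod_zmod_translate (p ^ m) (n : ZMod (p ^ m)) (fun x => if IsUnit x then x else 1)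
    _ = ∏ x ∈ univ.filter (fun x : ZMod (p ^ m) => IsUnit x), x := (Finset.prod_filter _ _).symm
    _ = -1 := wilson_zmod_pow hp hm hodd

end Gz

section GzPeriod

open scoped Classical

/-- The partial products of Morita's Gamma function, in `ZMod q`. -/
noncomputable def gz (p q n : ℕ) : ZMod q :=
  (-1 : ZMod q) ^ n * ∏ k ∈ (range n).filter (fun k => ¬ p ∣ k), (k : ZMod q)

lemma gz_eq_prod_ite (p q n : ℕ) :
    gz p q n = (-1 : ZMod q) ^ n * ∏ k ∈ range n, (if ¬ p ∣ k then (k : ZMod q) else 1) := by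
  rw [gz, Finset.prod_filter]

variable {p : ℕ} (hp : p.Prime) {m : ℕ} (hm : m ≠ 0) (hodd : p % 2 = 1)

include hp hm hodd in
lemma gz_add_pow (n : ℕ) : gz p (p ^ m) (n + p ^ m) = gz p (p ^ m) n := by
  haveI : NeZero (p ^ m) := ⟨pow_ne_zero _ hp.ne_zero⟩
  have hoddq : Odd (p ^ m) := (Nat.odd_iff.mpr hodd).pow
  rw [gz_eq_prod_ite, gz_eq_prod_ite, Finset.prod_range_add, pow_add, hoddq.neg_one_pow]
  rw [shifted_wilson hp hm hodd n]
  ring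

include hp hm hodd in
lemma gz_modEq {a b : ℕ} (h : a ≡ b [MOD p ^ m]) : gz p (p ^ m) a = gz p (p ^ m) b := by
  wlog hab : a ≤ b generalizing a b
  · exact (this h.symm (le_of_not_ge hab)).symm
  obtain ⟨c, hc⟩ := (Nat.modEq_iff_dvd' hab).mp h
  have hb : b = a + p ^ m * c := by omega
  subst hb
  clear h hc hab
  induction c with
  | zero => simp
  | succ c ih =>
    have he : a + p ^ m * (c + 1) = (a + p ^ m * c) + p ^ m := by ring
    rw [he, gz_add_pow hp hm hodd, ih]

end GzPeriod
section Padic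

variable {p : ℕ} [hF : Fact p.Prime]

/-- Partial products of Morita's Gamma, in `ℤ_[p]`. -/
noncomputable def gp (p : ℕ) [Fact p.Prime] (n : ℕ) : ℤ_[p] :=
  (-1 : ℤ_[p]) ^ n * ∏ k ∈ (Finset.range n).filter (fun k => ¬ p ∣ k), (k : ℤ_[p])

lemma toZModPow_gp (j n : ℕ) :
    (PadicInt.toZModPow j) (gp p n) = gz p (p ^ j) n := by
  rw [gp, gz, map_mul, map_pow, map_neg, map_one, map_prod]
  congr 1
  exact Finset.prod_congr rfl (fun k _ => map_natCast _ k)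

variable (hodd : p % 2 = 1)

include hodd in
lemma gp_sub_mem {j a b : ℕ} (hj : j ≠ 0) (h : a ≡ b [MOD p ^ j]) :
    gp p a - gp p b ∈ Ideal.span {(p : ℤ_[p]) ^ j} := by
  rw [← PadicInt.ker_toZModPow, RingHom.mem_ker, map_sub, toZModPow_gp, toZModPow_gp,
    gz_modEq hF.out hj hodd h, sub_self]

lemma appr_modEq (x : ℤ_[p]) {n n' : ℕ} (h : n ≤ n') :
    x.appr n ≡ x.appr n' [MOD p ^ n] :=
  (Nat.modEq_iff_dvd' (PadicInt.appr_mono x h)).mpr (PadicInt.dvd_appr_sub_appr x n n' h)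

include hodd in
lemma toZModPow_moritaGamma (x : ℤ_[p]) {j : ℕ} (hj : j ≠ 0) :
    PadicInt.toZModPow j (moritaGamma p x) = gz p (p ^ j) (x.appr j) := by
  set s : ℕ → ℤ_[p] := fun n => gp p (x.appr n) with hs
  have hcauchy : CauchySeq s := by
    rw [Metric.cauchySeq_iff']
    intro ε hε
    obtain ⟨k, hk⟩ := PadicInt.exists_pow_neg_lt p hε
    refine ⟨k + 1, fun n hn => ?_⟩
    rw [dist_eq_norm]
    have hbase : (1 : ℝ) ≤ (p : ℝ) := by exact_mod_cast hF.out.one_lt.le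
    have hmono : (p : ℝ) ^ (-((k + 1 : ℕ) : ℤ)) ≤ (p : ℝ) ^ (-(k : ℤ)) :=
      zpow_le_zpow_right₀ hbase (by omega)
    refine lt_of_le_of_lt (le_trans ?_ hmono) hk
    rw [PadicInt.norm_le_pow_iff_mem_span_pow]
    exact gp_sub_mem hodd (by omega) ((appr_modEq x hn).symm)
  obtain ⟨L, hL⟩ := cauchySeq_tendsto_of_complete hcauchy
  have hMG : moritaGamma p x = L := hL.limUnder_eq
  rw [hMG]
  have hjpos : (0 : ℝ) < (p : ℝ) ^ (-(j : ℤ)) := by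
    apply zpow_pos
    exact_mod_cast hF.out.pos
  obtain ⟨N, hN⟩ := Metric.tendsto_atTop.mp hL _ hjpos
  set n := max N j with hn
  have h1 : dist (s n) L < (p : ℝ) ^ (-(j : ℤ)) := hN n (le_max_left _ _)
  have h2 : L - s n ∈ Ideal.span {(p : ℤ_[p]) ^ j} := by
    rw [← PadicInt.norm_le_pow_iff_mem_span_pow, ← neg_sub, norm_neg, ← dist_eq_norm]
    exact le_of_lt h1
  have h3 : PadicInt.toZModPow j L = PadicInt.toZModPow j (s n) := by
    have h2' : L - s n ∈ RingHom.ker (PadicInt.toZModPow j : ℤ_[p] →+* ZMod (p ^ j)) := by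
      rw [PadicInt.ker_toZModPow]; exact h2
    have h2'' := RingHom.mem_ker.mp h2'
    rw [map_sub] at h2''
    linear_combination h2''
  rw [h3, hs, toZModPow_gp]
  exact gz_modEq hF.out hj hodd ((appr_modEq x (le_max_right N j)).symm)

include hodd in
lemma toZModPow_moritaGamma' (x : ℤ_[p]) {j : ℕ} (hj : j ≠ 0) {N : ℕ}
    (hN : (N : ZMod (p ^ j)) = PadicInt.toZModPow j x) :
    PadicInt.toZModPow j (moritaGamma p x) = gz p (p ^ j) N := by
  rw [toZModPow_moritaGamma hodd x hj]
  apply gz_modEq hF.out hj hodd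
  have : ((x.appr j : ℕ) : ZMod (p ^ j)) = PadicInt.toZModPow j x := rfl
  rw [← ZMod.natCast_eq_natCast_iff] at *
  rw [this, hN]

end Padic
section Expansion

variable {R : Type*} [CommRing R] {ι : Type*} [DecidableEq ι]

lemma prod_add_nilpotent {x : R} (hx : x * x = 0) (S : Finset ι) (f : ι → R) :
    ∏ i ∈ S, (f i + x) = ∏ i ∈ S, f i + x * ∑ i ∈ S, ∏ j ∈ S.erase i, f j := by
  induction S using Finset.cons_induction with
  | empty => simp
  | cons a S ha ih =>
    have herase : ∀ i ∈ S, (Finset.cons a S ha).erase i = Finset.cons a (S.erase i)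
        (fun hmem => ha (Finset.mem_of_mem_erase hmem)) := by
      intro i hi
      have hai : a ≠ i := fun h => ha (h ▸ hi)
      ext b
      simp only [Finset.mem_erase, Finset.mem_cons]
      constructor
      · rintro ⟨hbi, hb | hb⟩
        · exact Or.inl hb
        · exact Or.inr ⟨hbi, hb⟩
      · rintro (rfl | ⟨hbi, hb⟩)
        · exact ⟨hai, Or.inl rfl⟩
        · exact ⟨hbi, Or.inr hb⟩
    have hsum : ∑ i ∈ Finset.cons a S ha, ∏ j ∈ (Finset.cons a S ha).erase i, f j
        = ∏ j ∈ S, f j + f a * ∑ i ∈ S, ∏ j ∈ S.erase i, f j := by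
      rw [Finset.sum_cons, Finset.erase_cons]
      congr 1
      rw [Finset.mul_sum]
      refine Finset.sum_congr rfl fun i hi => ?_
      rw [herase i hi, Finset.prod_cons]
    rw [Finset.prod_cons, Finset.prod_cons, hsum, ih]
    linear_combination (∑ i ∈ S, ∏ j ∈ S.erase i, f j) * hx

end Expansion
section InvSum

variable {p : ℕ} (hp : p.Prime) (hodd : p % 2 = 1)

include hp hodd in
lemma sum_univ_zmod [NeZero p] : ∑ x : ZMod p, x = 0 := by
  rw [← sum_range_cast p (fun x : ZMod p => x), ← Nat.cast_sum]
  have h3 : (∑ j ∈ range p, j) * 2 = p * (p - 1) := Finset.sum_range_id_mul_two p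
  have hcop : Nat.Coprime p 2 := (Nat.Prime.coprime_iff_not_dvd hp).mpr (fun h => by
    have := Nat.le_of_dvd (by norm_num) h
    have := hp.two_le
    omega)
  have h4 : p ∣ ∑ j ∈ range p, j :=
    hcop.dvd_of_dvd_mul_right (h3 ▸ Dvd.intro _ rfl)
  exact (ZMod.natCast_eq_zero_iff _ _).mpr h4

include hp hodd in
lemma sum_inv_block (c' : ℕ) :
    ∑ i ∈ range p, (if ¬ p ∣ (c' + i) then ((c' + i : ℕ) : ZMod p)⁻¹ else 0) = 0 := by
  haveI : Fact p.Prime := ⟨hp⟩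
  haveI : NeZero p := ⟨hp.ne_zero⟩
  have hterm : ∀ i : ℕ, (if ¬ p ∣ (c' + i) then ((c' + i : ℕ) : ZMod p)⁻¹ else 0)
      = (fun x : ZMod p => x⁻¹) ((c' : ZMod p) + (i : ZMod p)) := by
    intro i
    have hcast : ((c' + i : ℕ) : ZMod p) = (c' : ZMod p) + i := by push_cast; ring
    simp only []
    rw [← hcast]
    by_cases hd : p ∣ (c' + i)
    · have h0 : ((c' + i : ℕ) : ZMod p) = 0 := (ZMod.natCast_eq_zero_iff _ _).mpr hd
      rw [if_neg (not_not_intro hd), h0, inv_zero]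
    · rw [if_pos hd]
  rw [Finset.sum_congr rfl (fun i _ => hterm i),
    sum_range_cast p (fun x : ZMod p => (fun y : ZMod p => y⁻¹) ((c' : ZMod p) + x)),
    sum_zmod_translate p (c' : ZMod p) (fun y : ZMod p => y⁻¹)]
  have hbij : ∑ x : ZMod p, x⁻¹ = ∑ x : ZMod p, x :=
    Fintype.sum_bijective (fun x : ZMod p => x⁻¹) inv_involutive.bijective _ _
      (fun x => rfl)
  rw [hbij]
  exact sum_univ_zmod hp hodd

include hp hodd in
lemma sum_inv_blocks (c t : ℕ) :
    ∑ j ∈ range (p * t), (if ¬ p ∣ (c + j) then ((c + j : ℕ) : ZMod p)⁻¹ else 0) = 0 := by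
  induction t with
  | zero => simp
  | succ t ih =>
    rw [show p * (t + 1) = p * t + p from by ring, Finset.sum_range_add, ih, zero_add]
    refine Eq.trans (Finset.sum_congr rfl fun i _ => ?_) (sum_inv_block hp hodd (c + p * t))
    rw [show c + (p * t + i) = (c + p * t) + i from by ring]

include hp hodd in
lemma prod_shift (c t₁ t₂ : ℕ) :
    ∏ j ∈ range (p * t₁), (if ¬ p ∣ (c + j) then ((c + p * t₂ + j : ℕ) : ZMod (p ^ 2)) else 1)
      = ∏ j ∈ range (p * t₁), (if ¬ p ∣ (c + j) then ((c + j : ℕ) : ZMod (p ^ 2)) else 1) := by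
  classical
  rw [← Finset.prod_filter, ← Finset.prod_filter]
  set S := (range (p * t₁)).filter (fun j => ¬ p ∣ (c + j)) with hS
  set x : ZMod (p ^ 2) := ((p * t₂ : ℕ) : ZMod (p ^ 2)) with hx
  have hx2 : x * x = 0 := by
    rw [hx, ← Nat.cast_mul, show (p * t₂) * (p * t₂) = p ^ 2 * (t₂ * t₂) from by ring,
      Nat.cast_mul, ZMod.natCast_self, zero_mul]
  have hcast : ∀ j, ((c + p * t₂ + j : ℕ) : ZMod (p ^ 2)) = ((c + j : ℕ) : ZMod (p ^ 2)) + x := by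
    intro j; rw [hx]; push_cast; ring
  have h1 : ∏ j ∈ S, ((c + p * t₂ + j : ℕ) : ZMod (p ^ 2))
      = ∏ j ∈ S, (((c + j : ℕ) : ZMod (p ^ 2)) + x) := Finset.prod_congr rfl (fun j _ => hcast j)
  rw [h1, prod_add_nilpotent hx2 S (fun j => ((c + j : ℕ) : ZMod (p ^ 2)))]
  set Tn : ℕ := ∑ i ∈ S, ∏ j ∈ S.erase i, (c + j) with hT
  have hcastT : ∑ i ∈ S, ∏ j ∈ S.erase i, ((c + j : ℕ) : ZMod (p ^ 2)) = (Tn : ZMod (p ^ 2)) := by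
    rw [hT, Nat.cast_sum]
    exact Finset.sum_congr rfl fun i _ => (Nat.cast_prod _ _).symm
  have hdvd : p ∣ Tn := by
    haveI : Fact p.Prime := ⟨hp⟩
    rw [← ZMod.natCast_eq_zero_iff]
    have hrw : ((Tn : ℕ) : ZMod p) = ∑ i ∈ S, ∏ j ∈ S.erase i, ((c + j : ℕ) : ZMod p) := by
      rw [hT, Nat.cast_sum]
      exact Finset.sum_congr rfl fun i _ => Nat.cast_prod _ _
    rw [hrw]
    have hne : ∀ i ∈ S, ((c + i : ℕ) : ZMod p) ≠ 0 := by
      intro i hi h0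
      exact (Finset.mem_filter.mp hi).2 ((ZMod.natCast_eq_zero_iff _ _).mp h0)
    have hterm : ∀ i ∈ S, ∏ j ∈ S.erase i, ((c + j : ℕ) : ZMod p)
        = ((c + i : ℕ) : ZMod p)⁻¹ * ∏ j ∈ S, ((c + j : ℕ) : ZMod p) := by
      intro i hi
      have h := Finset.mul_prod_erase S (fun j => ((c + j : ℕ) : ZMod p)) hi
      rw [← h, ← mul_assoc, inv_mul_cancel₀ (hne i hi), one_mul]
    rw [Finset.sum_congr rfl hterm, ← Finset.sum_mul]
    have hzero : ∑ i ∈ S, ((c + i : ℕ) : ZMod p)⁻¹ = 0 := by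
      rw [hS, Finset.sum_filter]
      exact sum_inv_blocks hp hodd c t₁
    rw [hzero, zero_mul]
  obtain ⟨s, hs⟩ := hdvd
  have hxT : x * (Tn : ZMod (p ^ 2)) = 0 := by
    rw [hx, hs, ← Nat.cast_mul, show (p * t₂) * (p * s) = p ^ 2 * (t₂ * s) from by ring,
      Nat.cast_mul, ZMod.natCast_self, zero_mul]
  rw [hcastT, hxT, add_zero]

end InvSum
section MainArith

variable {p : ℕ} (hp : p.Prime) (hodd : p % 2 = 1)

include hp hodd in
lemma gz_quarter (c t₁ t₂ : ℕ) (ht : t₁ + t₂ = p) :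
    gz p (p ^ 2) (c + p * t₁) * gz p (p ^ 2) (c + p * t₂) = gz p (p ^ 2) c ^ 2 := by
  haveI : NeZero (p ^ 2) := ⟨pow_ne_zero _ hp.ne_zero⟩
  have hoddP : Odd p := Nat.odd_iff.mpr hodd
  set Pi : ℕ → ZMod (p ^ 2) := fun t =>
    ∏ j ∈ range (p * t), (if ¬ p ∣ (c + j) then ((c + j : ℕ) : ZMod (p ^ 2)) else 1) with hPi
  have hsplit : ∀ t, gz p (p ^ 2) (c + p * t)
      = gz p (p ^ 2) c * ((-1) ^ (p * t) * Pi t) := by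
    intro t
    rw [gz_eq_prod_ite, gz_eq_prod_ite, Finset.prod_range_add, pow_add, hPi]
    ring
  have hfull : (∏ j ∈ range (p ^ 2),
      (if ¬ p ∣ (c + j) then ((c + j : ℕ) : ZMod (p ^ 2)) else 1)) = -1 :=
    shifted_wilson hp (two_ne_zero) hodd c
  have hsplit2 : Pi t₂ * (∏ j ∈ range (p * t₁),
      (if ¬ p ∣ (c + (p * t₂ + j)) then ((c + (p * t₂ + j) : ℕ) : ZMod (p ^ 2)) else 1)) = -1 := by
    rw [hPi, ← Finset.prod_range_add, show p * t₂ + p * t₁ = p ^ 2 from by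
      rw [← Nat.mul_add, Nat.add_comm t₂ t₁, ht]; ring]
    exact hfull
  have hfactor : (∏ j ∈ range (p * t₁),
      (if ¬ p ∣ (c + (p * t₂ + j)) then ((c + (p * t₂ + j) : ℕ) : ZMod (p ^ 2)) else 1))
      = Pi t₁ := by
    refine Eq.trans ?_ (prod_shift hp hodd c t₁ t₂)
    refine Finset.prod_congr rfl fun j _ => ?_
    have hassoc : c + (p * t₂ + j) = c + p * t₂ + j := by ring
    have hcond : p ∣ (c + p * t₂ + j) ↔ p ∣ (c + j) := by
      rw [show c + p * t₂ + j = p * t₂ + (c + j) from by ring]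
      exact Nat.dvd_add_right ⟨t₂, rfl⟩
    rw [hassoc]
    by_cases hd : p ∣ (c + j)
    · rw [if_neg (not_not_intro (hcond.mpr hd)), if_neg (not_not_intro hd)]
    · rw [if_pos (fun hc => hd (hcond.mp hc)), if_pos hd]
  have hPP : Pi t₂ * Pi t₁ = -1 := by rw [← hfactor]; exact hsplit2
  have hsign : ((-1 : ZMod (p ^ 2)) ^ (p * t₁)) * (-1) ^ (p * t₂) = -1 := by
    rw [← pow_add, show p * t₁ + p * t₂ = p * p from by rw [← Nat.mul_add, ht]]
    exact (hoddP.mul hoddP).neg_one_pow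
  calc gz p (p ^ 2) (c + p * t₁) * gz p (p ^ 2) (c + p * t₂)
      = gz p (p ^ 2) c ^ 2 * ((((-1) ^ (p * t₁)) * (-1) ^ (p * t₂)) * (Pi t₂ * Pi t₁)) := by
        rw [hsplit t₁, hsplit t₂]; ring
    _ = gz p (p ^ 2) c ^ 2 := by rw [hsign, hPP]; ring

end MainArith

/-- For a prime `p ≡ 3 (mod 4)`,
`Γ_p((p+1)/4)·Γ_p((1-p)/4) ≡ Γ_p(1/4)^2 (mod p²)`.
Here `u ∈ ℤ_p` is the element `1/4`, so `(p+1)/4 = (p+1)·u` and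
`(1-p)/4 = (1-p)·u`. -/
theorem padicGamma_quarter_shift (p : ℕ) [Fact p.Prime] (hp4 : p % 4 = 3)
    (u : ℤ_[p]) (hu : 4 * u = 1) :
    ∃ c : ℤ_[p],
      moritaGamma p ((1 + (p : ℤ_[p])) * u) * moritaGamma p ((1 - (p : ℤ_[p])) * u)
        - (moritaGamma p u) ^ 2 = (p : ℤ_[p]) ^ 2 * c := by
  have hp : p.Prime := Fact.out
  have hodd : p % 2 = 1 := by omega
  haveI : NeZero (p ^ 2) := ⟨pow_ne_zero _ hp.ne_zero⟩
  set φ := (PadicInt.toZModPow 2 : ℤ_[p] →+* ZMod (p ^ 2)) with hφ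
  set v : ZMod (p ^ 2) := φ u with hv
  set C : ℕ := v.val with hCdef
  have hC : (C : ZMod (p ^ 2)) = v := by
    rw [hCdef]; simp [ZMod.natCast_val, ZMod.cast_id]
  have hc1lt : C % p < p := Nat.mod_lt _ hp.pos
  set t₁ : ℕ := C % p with ht₁
  set t₂ : ℕ := p - C % p with ht₂
  have ht : t₁ + t₂ = p := by omega
  set A : ℕ := C + p * t₁ with hA
  set B : ℕ := C + p * t₂ with hB
  -- p * (C % p) ≡ p * C mod p^2
  have hmodp : ((p * t₁ : ℕ) : ZMod (p ^ 2)) = ((p * C : ℕ) : ZMod (p ^ 2)) := by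
    rw [ZMod.natCast_eq_natCast_iff]
    rw [show p ^ 2 = p * p from sq p]
    exact Nat.ModEq.mul_left' p (Nat.mod_modEq C p)
  have hpC : ((p * C : ℕ) : ZMod (p ^ 2)) = (p : ZMod (p ^ 2)) * v := by
    rw [Nat.cast_mul, hC]
  have hcastA : ((A : ℕ) : ZMod (p ^ 2)) = φ ((1 + (p : ℤ_[p])) * u) := by
    rw [map_mul, map_add, map_one, map_natCast, ← hv, hA, Nat.cast_add, hC, hmodp, hpC]
    ring
  have hsum2 : ((p * t₂ : ℕ) : ZMod (p ^ 2)) = - ((p * C : ℕ) : ZMod (p ^ 2)) := by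
    have hadd : (p * t₂) + (p * t₁) = p ^ 2 := by
      rw [ht₂, ht₁, sq, ← Nat.mul_add, Nat.sub_add_cancel hc1lt.le]
    have : ((p * t₂ : ℕ) : ZMod (p ^ 2)) + ((p * t₁ : ℕ) : ZMod (p ^ 2)) = 0 := by
      rw [← Nat.cast_add, hadd, ZMod.natCast_self]
    rw [← hmodp]
    linear_combination this
  have hcastB : ((B : ℕ) : ZMod (p ^ 2)) = φ ((1 - (p : ℤ_[p])) * u) := by
    rw [map_mul, map_sub, map_one, map_natCast, ← hv, hB, Nat.cast_add, hC, hsum2, hpC]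
    ring
  have hΓA := toZModPow_moritaGamma' hodd ((1 + (p : ℤ_[p])) * u) (two_ne_zero) hcastA
  have hΓB := toZModPow_moritaGamma' hodd ((1 - (p : ℤ_[p])) * u) (two_ne_zero) hcastB
  have hΓC := toZModPow_moritaGamma' hodd u (two_ne_zero) (hC.trans hv)
  have hmain : gz p (p ^ 2) A * gz p (p ^ 2) B = gz p (p ^ 2) C ^ 2 :=
    gz_quarter hp hodd C t₁ t₂ ht
  have hker : moritaGamma p ((1 + (p : ℤ_[p])) * u) * moritaGamma p ((1 - (p : ℤ_[p])) * u)
      - (moritaGamma p u) ^ 2 ∈ Ideal.span {(p : ℤ_[p]) ^ 2} := by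
    rw [← PadicInt.ker_toZModPow, RingHom.mem_ker, map_sub, map_mul, map_pow,
      ← hφ, hΓA, hΓB, hΓC, hmain, sub_self]
  obtain ⟨c, hc⟩ := Ideal.mem_span_singleton.mp hker
  exact ⟨c, hc⟩
end
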